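/- Let k be an integer, ε, B, ω̃ real with B ≠ 0, and suppose ψ(i·ω̃, ε, B) = 0, where ψ(μ, ε, B) := −ε·B·μ − (−1)^k·B·exp(−μ) + (1/2)·(1 + exp(−π·ε·μ)). Define ψ_ε(μ) := −μ·(B + (π/2)·exp(−π·ε·μ)) and ψ_B(μ) := −ε·μ − (−1)^k·exp(−μ) (the partial derivatives of ψ with respect to ε and B). Then −B·Im( conj(ψ_ε(i·ω̃)) · ψ_B(i·ω̃) ) = ω̃·(B + π/2)·cos²(π·ε·ω̃/2). -/

import Mathlib

open Real

/-- Jacobian determinant identity at purely imaginary eigenvalues: if `ψ(iω̃,ε,B) = 0` then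
`-B · Im(conj(ψ_ε(iω̃)) · ψ_B(iω̃)) = ω̃ (B + π/2) cos²(πεω̃/2)`. -/
theorem stmt_17 (k : ℤ) (ε B ωt : ℝ) (hB : B ≠ 0)
    (ψε ψB : ℂ → ℂ)
    (hψε : ∀ μ, ψε μ = -μ * ((B:ℂ) + ((π/2 : ℝ):ℂ) * Complex.exp (-((π*ε : ℝ):ℂ)*μ)))
    (hψB : ∀ μ, ψB μ = -(ε:ℂ)*μ - (-1:ℂ)^k * Complex.exp (-μ))
    (h : -(ε:ℂ)*(B:ℂ)*((ωt:ℂ)*Complex.I)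
         - (-1:ℂ)^k*(B:ℂ)*Complex.exp (-((ωt:ℂ)*Complex.I))
         + (1/2)*(1 + Complex.exp (-((π*ε : ℝ):ℂ)*((ωt:ℂ)*Complex.I))) = 0) :
    -B * ((starRingEnd ℂ) (ψε ((ωt:ℂ)*Complex.I)) * ψB ((ωt:ℂ)*Complex.I)).im
      = ωt * (B + π/2) * (Real.cos (π*ε*ωt/2))^2 := by
  have hBC : (B:ℂ) ≠ 0 := Complex.ofReal_ne_zero.mpr hB
  set c := Real.cos (π*ε*ωt) with hc
  set s := Real.sin (π*ε*ωt) with hs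
  have hz : Complex.exp (-((π*ε : ℝ):ℂ)*((ωt:ℂ)*Complex.I)) = (c:ℂ) - (s:ℂ)*Complex.I := by
    have e1 : -((π*ε : ℝ):ℂ)*((ωt:ℂ)*Complex.I) = ((-(π*ε*ωt):ℝ):ℂ)*Complex.I := by
      push_cast; ring
    rw [e1, Complex.exp_mul_I, ← Complex.ofReal_cos, ← Complex.ofReal_sin,
      Real.cos_neg, Real.sin_neg, ← hc, ← hs]
    push_cast
    ring
  rw [hz] at h
  have hψB' : ψB ((ωt:ℂ)*Complex.I) = -(1+((c:ℂ)-(s:ℂ)*Complex.I)) / (2*(B:ℂ)) := by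
    rw [hψB]
    field_simp
    linear_combination (2:ℂ) * h
  have hw : (starRingEnd ℂ) (ψε ((ωt:ℂ)*Complex.I)) * ψB ((ωt:ℂ)*Complex.I)
      = (((-ωt*s*(B-π/2)/(2*B)):ℝ):ℂ)
        + (((-(ωt*((π/2)*s^2 + (B+(π/2)*c)*(1+c))))/(2*B):ℝ):ℂ)*Complex.I := by
    rw [hψε, hz, hψB']
    simp only [map_mul, map_add, map_sub, map_neg, Complex.conj_ofReal, Complex.conj_I]
    push_cast
    field_simp
    linear_combination (2*(ωt:ℂ)*(B:ℂ)*(s:ℂ) - (ωt:ℂ)*(π:ℂ)*(s:ℂ)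
      + (ωt:ℂ)*(π:ℂ)*(s:ℂ)^2*Complex.I) * Complex.I_sq
  rw [hw]
  simp only [Complex.add_im, Complex.ofReal_im, Complex.mul_im, Complex.ofReal_re,
    Complex.I_im, Complex.I_re, mul_zero, mul_one, zero_add, zero_mul, add_zero]
  have hsc : s^2 + c^2 = 1 := Real.sin_sq_add_cos_sq (π*ε*ωt)
  have hch : Real.cos (π*ε*ωt/2)^2 = (1+c)/2 := by
    have h2 : 2*(π*ε*ωt/2) = π*ε*ωt := by ring
    rw [Real.cos_sq, h2, hc]; ring
  rw [hch]
  field_simp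
  linear_combination (ωt*π) * hsc
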